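/- Let k ≥ 3 and t ≥ 2 be integers and c > 0 a real number. The eigenvalues of the t×t matrix T(k,t,c) are exactly k together with the zeros of the polynomial (c−1)·G_{t−2} + G_{t−1}; in particular all eigenvalues of T(k,t,c) are real and simple. -/

import Mathlib

open Polynomial

/-- The adjacency matrix of a simple graph over `ℝ` is Hermitian. -/
theorem adjMatrix_isHermitian {V : Type*} [Fintype V] [DecidableEq V]
    (G : SimpleGraph V) [DecidableRel G.Adj] : (G.adjMatrix ℝ).IsHermitian := by
  rw [Matrix.IsHermitian, Matrix.conjTranspose_eq_transpose_of_trivial]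
  exact G.isSymm_adjMatrix

/-- The multiset of adjacency eigenvalues (with multiplicity) of a finite simple graph. -/
noncomputable def eigMultiset {V : Type*} [Fintype V] [DecidableEq V]
    (G : SimpleGraph V) [DecidableRel G.Adj] : Multiset ℝ :=
  Multiset.map (adjMatrix_isHermitian G).eigenvalues Finset.univ.val

/-- The second largest adjacency eigenvalue (with multiplicity) of a finite simple graph:
the second-to-last entry of the nondecreasing sorted list of eigenvalues. -/
noncomputable def secondEigenvalue {V : Type*} [Fintype V] [DecidableEq V]
    (G : SimpleGraph V) [DecidableRel G.Adj] : ℝ :=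
  ((eigMultiset G).sort (· ≤ ·)).getD (((eigMultiset G).sort (· ≤ ·)).length - 2) 0

/-- The largest adjacency eigenvalue (spectral radius) of a finite simple graph. -/
noncomputable def largestEigenvalue {V : Type*} [Fintype V] [DecidableEq V]
    (G : SimpleGraph V) [DecidableRel G.Adj] : ℝ :=
  ((eigMultiset G).sort (· ≤ ·)).getD (((eigMultiset G).sort (· ≤ ·)).length - 1) 0

/-- The orthogonal polynomials `F_i^{(k)}`. -/
noncomputable def Fpoly (k : ℕ) : ℕ → Polynomial ℝ
  | 0 => 1
  | 1 => X
  | 2 => X ^ 2 - C (k : ℝ)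
  | n + 3 => X * Fpoly k (n + 2) - C ((k : ℝ) - 1) * Fpoly k (n + 1)

/-- `G_i = Σ_{j=0}^i F_j`. -/
noncomputable def Gpoly (k : ℕ) (i : ℕ) : Polynomial ℝ :=
  ∑ j ∈ Finset.range (i + 1), Fpoly k j

/-- The tridiagonal matrix `T(k,t,c)`: superdiagonal `(k, k-1, …, k-1)`,
subdiagonal `(1, …, 1, c)`, diagonal chosen so that every row sums to `k`. -/
noncomputable def Tmat (k t : ℕ) (c : ℝ) : Matrix (Fin t) (Fin t) ℝ :=
  Matrix.of fun i j =>
    if (j : ℕ) = (i : ℕ) + 1 then (if (i : ℕ) = 0 then (k : ℝ) else (k : ℝ) - 1)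
    else if (i : ℕ) = (j : ℕ) + 1 then (if (i : ℕ) = t - 1 then c else 1)
    else if i = j then
      (k : ℝ) - (if (i : ℕ) + 1 < t then (if (i : ℕ) = 0 then (k : ℝ) else (k : ℝ) - 1) else 0)
        - (if 0 < (i : ℕ) then (if (i : ℕ) = t - 1 then c else 1) else 0)
    else 0

/-- `M(k,t,c) = 1 + Σ_{i=0}^{t-3} k (k-1)^i + k (k-1)^{t-2} / c`. -/
noncomputable def Mbound (k t : ℕ) (c : ℝ) : ℝ :=
  1 + (∑ i ∈ Finset.range (t - 2), (k : ℝ) * ((k : ℝ) - 1) ^ i)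
    + (k : ℝ) * ((k : ℝ) - 1) ^ (t - 2) / c


section Aux
open Matrix

variable {R : Type*} [CommRing R]

def triM (a b c : ℕ → R) (n : ℕ) : Matrix (Fin n) (Fin n) R :=
  Matrix.of fun i j =>
    if (i : ℕ) = j then a i
    else if (j : ℕ) = (i : ℕ) + 1 then b i
    else if (i : ℕ) = (j : ℕ) + 1 then c j else 0

def triDet (a b c : ℕ → R) : ℕ → R
  | 0 => 1
  | 1 => a 0
  | n + 2 => a (n + 1) * triDet a b c (n + 1) - b n * c n * triDet a b c n

lemma triM_apply_val (a b c : ℕ → R) (n : ℕ) (i j : Fin n) :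
    triM a b c n i j = if (i : ℕ) = (j : ℕ) then a i
      else if (j : ℕ) = (i : ℕ) + 1 then b i
      else if (i : ℕ) = (j : ℕ) + 1 then c j else 0 := rfl

lemma succAbove_val {n : ℕ} (p : Fin (n+1)) (x : Fin n) :
    ((p.succAbove x : Fin (n+1)) : ℕ) = if (x : ℕ) < (p : ℕ) then (x : ℕ) else (x : ℕ) + 1 := by
  rcases lt_or_ge (Fin.castSucc x) p with h | h
  · rw [Fin.succAbove_of_castSucc_lt _ _ h]
    have : (x : ℕ) < (p : ℕ) := h
    simp [this]
  · rw [Fin.succAbove_of_le_castSucc _ _ h]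
    have : ¬ ((x : ℕ) < (p : ℕ)) := not_lt.2 h
    simp [this]

lemma triM_castSucc (a b c : ℕ → R) (n : ℕ) :
    (triM a b c (n + 1)).submatrix Fin.castSucc Fin.castSucc = triM a b c n := by
  ext i j
  simp [triM, Matrix.submatrix_apply]

theorem det_triM (a b c : ℕ → R) (n : ℕ) : (triM a b c n).det = triDet a b c n := by
  induction n using Nat.strong_induction_on with
  | _ n ih =>
    match n with
    | 0 => simp [triDet]
    | 1 => simp [triDet, triM]
    | n + 2 =>
      rw [Matrix.det_succ_row _ (Fin.last (n + 1))]
      rw [Fin.sum_univ_castSucc, Fin.sum_univ_castSucc]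
      have hz : ∀ j : Fin n,
          (-1 : R) ^ ((Fin.last (n+1) : ℕ) + ((j.castSucc.castSucc : Fin (n+2)) : ℕ)) *
            triM a b c (n+2) (Fin.last (n+1)) j.castSucc.castSucc *
            ((triM a b c (n+2)).submatrix (Fin.last (n+1)).succAbove
              (j.castSucc.castSucc).succAbove).det = 0 := by
        intro j
        have hj := j.isLt
        have : triM a b c (n+2) (Fin.last (n+1)) j.castSucc.castSucc = 0 := by
          rw [triM_apply_val]
          simp only [Fin.val_last, Fin.coe_castSucc]
          split_ifs <;> first | rfl | omega
        rw [this]; ring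
      rw [Finset.sum_eq_zero (fun j _ => hz j), zero_add]
      have e1 : triM a b c (n+2) (Fin.last (n+1)) (Fin.last n).castSucc = c n := by
        rw [triM_apply_val]
        simp only [Fin.val_last, Fin.coe_castSucc]
        split_ifs <;> first | rfl | omega
      have e2 : triM a b c (n+2) (Fin.last (n+1)) (Fin.last (n+1)) = a (n+1) := by
        rw [triM_apply_val]
        simp only [Fin.val_last]
        split_ifs <;> first | rfl | omega
      have s2 : ((triM a b c (n+2)).submatrix (Fin.last (n+1)).succAbove
          (Fin.last (n+1)).succAbove).det = triDet a b c (n+1) := by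
        rw [Fin.succAbove_last, triM_castSucc]
        exact ih (n+1) (by omega)
      set B := (triM a b c (n+2)).submatrix Fin.castSucc
          ((Fin.last n).castSucc.succAbove) with hB
      have s1 : ((triM a b c (n+2)).submatrix (Fin.last (n+1)).succAbove
          ((Fin.last n).castSucc.succAbove)).det = b n * triDet a b c n := by
        rw [Fin.succAbove_last, ← hB]
        rw [Matrix.det_succ_column _ (Fin.last n)]
        rw [Fin.sum_univ_castSucc]
        have hz2 : ∀ i : Fin n,
            (-1 : R) ^ (((i.castSucc : Fin (n+1)) : ℕ) + ((Fin.last n : Fin (n+1)) : ℕ)) *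
              B i.castSucc (Fin.last n) *
              (B.submatrix (i.castSucc).succAbove (Fin.last n).succAbove).det = 0 := by
          intro i
          have hi := i.isLt
          have : B i.castSucc (Fin.last n) = 0 := by
            rw [hB]
            simp only [Matrix.submatrix_apply]
            rw [triM_apply_val]
            simp only [Fin.coe_castSucc, succAbove_val, Fin.val_last]
            split_ifs <;> first | rfl | omega
          rw [this]; ring
        rw [Finset.sum_eq_zero (fun i _ => hz2 i), zero_add]
        have eb : B (Fin.last n) (Fin.last n) = b n := by
          rw [hB]
          simp only [Matrix.submatrix_apply]
          rw [triM_apply_val]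
          simp only [Fin.coe_castSucc, succAbove_val, Fin.val_last, Nat.lt_irrefl, if_false]
          split_ifs <;> first | rfl | omega
        have sbm : (B.submatrix (Fin.last n).succAbove (Fin.last n).succAbove).det
            = triDet a b c n := by
          rw [Fin.succAbove_last]
          have : B.submatrix Fin.castSucc Fin.castSucc = triM a b c n := by
            ext i j
            have hj := j.isLt
            rw [hB]
            simp only [Matrix.submatrix_apply]
            rw [triM_apply_val, triM_apply_val]
            simp only [Fin.coe_castSucc, succAbove_val, Fin.val_last]
            rw [if_pos hj]
          rw [this]
          exact ih n (by omega)
        rw [eb, sbm]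
        simp only [Fin.val_last]
        have hpow : (-1 : R) ^ (n + n) = 1 := by
          have : n + n = 2*n := by omega
          rw [this, pow_mul]; norm_num
        rw [hpow]; ring
      rw [e1, e2, s1, s2]
      simp only [Fin.val_last, Fin.coe_castSucc]
      have h1 : (-1 : R) ^ (n + 1 + n) = -1 := by
        have : n + 1 + n = 2*n + 1 := by omega
        rw [this, pow_succ, pow_mul]; norm_num
      have h2 : (-1 : R) ^ (n + 1 + (n+1)) = 1 := by
        have : n + 1 + (n+1) = 2*(n+1) := by omega
        rw [this, pow_mul]; norm_num
      rw [h1, h2]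
      show _ = a (n + 1) * triDet a b c (n + 1) - b n * c n * triDet a b c n
      ring


noncomputable def aF (k t : ℕ) (c : ℝ) : ℕ → Polynomial ℝ := fun i =>
  X - C ((k : ℝ) - (if i + 1 < t then (if i = 0 then (k : ℝ) else (k : ℝ) - 1) else 0)
    - (if 0 < i then (if i = t - 1 then c else 1) else 0))
noncomputable def bF (k : ℕ) : ℕ → Polynomial ℝ :=
  fun i => -C (if i = 0 then (k : ℝ) else (k : ℝ) - 1)
noncomputable def cF (t : ℕ) (c : ℝ) : ℕ → Polynomial ℝ :=
  fun j => -C (if j + 1 = t - 1 then c else 1)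

open Matrix in
lemma charmatrix_Tmat (k t : ℕ) (c : ℝ) :
    charmatrix (Tmat k t c) = triM (aF k t c) (bF k) (cF t c) t := by
  ext i j
  by_cases hij : i = j
  · subst hij
    rw [charmatrix_apply_eq, triM_apply_val, if_pos rfl]
    simp only [Tmat, Matrix.of_apply, aF]
    rw [if_neg (by omega), if_neg (by omega)]
    simp
  · have hv : (i : ℕ) ≠ (j : ℕ) := fun h => hij (Fin.ext h)
    rw [charmatrix_apply_ne _ _ _ hij, triM_apply_val, if_neg hv]
    simp only [Tmat, Matrix.of_apply, bF, cF]
    by_cases h1 : (j : ℕ) = (i : ℕ) + 1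
    · rw [if_pos h1, if_pos h1]
    · rw [if_neg h1, if_neg h1]
      by_cases h2 : (i : ℕ) = (j : ℕ) + 1
      · rw [if_pos h2, if_pos h2, h2]
      · rw [if_neg h2, if_neg h2, if_neg hij, map_zero, neg_zero]

lemma triDet_eq_F (k t : ℕ) (c : ℝ) (ht : 2 ≤ t) :
    ∀ j, j ≤ t - 1 → triDet (aF k t c) (bF k) (cF t c) j = Fpoly k j := by
  intro j
  induction j using Nat.strong_induction_on with
  | _ j ih =>
    match j with
    | 0 => intro _; rfl
    | 1 =>
      intro _
      show aF k t c 0 = Fpoly k 1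
      simp only [aF, if_pos (by omega : 0 + 1 < t)]
      norm_num [Fpoly]
    | n + 2 =>
      intro hle
      show aF k t c (n+1) * triDet _ _ _ (n+1) - bF k n * cF t c n * triDet _ _ _ n = _
      rw [ih (n+1) (by omega) (by omega), ih n (by omega) (by omega)]
      have ha : aF k t c (n+1) = X := by
        simp only [aF, if_pos (by omega : n + 1 + 1 < t), if_neg (by omega : ¬ n + 1 = 0),
          if_pos (by omega : 0 < n + 1), if_neg (by omega : ¬ n + 1 = t - 1)]
        norm_num
      have hc : cF t c n = -C 1 := by
        simp only [cF, if_neg (by omega : ¬ n + 1 = t - 1)]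
      rw [ha, hc]
      match n with
      | 0 =>
        show X * Fpoly k 1 - bF k 0 * -C 1 * Fpoly k 0 = Fpoly k 2
        norm_num [bF, Fpoly]
        ring
      | m + 1 =>
        show X * Fpoly k (m + 2) - bF k (m+1) * -C 1 * Fpoly k (m+1) = Fpoly k (m + 3)
        simp only [bF, if_neg (by omega : ¬ m + 1 = 0), Fpoly, _root_.map_one]
        ring

lemma G_identity (k : ℕ) : ∀ j, 1 ≤ j →
    (X - C (k : ℝ)) * Gpoly k j = Fpoly k (j + 1) - C ((k : ℝ) - 1) * Fpoly k j := by
  intro j hj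
  induction j with
  | zero => omega
  | succ m ihm =>
    match m with
    | 0 =>
      simp only [Gpoly, Finset.sum_range_succ, Finset.sum_range_one, Fpoly]
      simp only [map_sub, _root_.map_one]
      ring
    | m + 1 =>
      have ih := ihm (by omega)
      have hsplit : Gpoly k (m + 2) = Gpoly k (m + 1) + Fpoly k (m + 2) := by
        simp [Gpoly, Finset.sum_range_succ]
      have hF : Fpoly k (m + 3) = X * Fpoly k (m + 2) - C ((k : ℝ) - 1) * Fpoly k (m + 1) := rfl
      rw [hsplit, mul_add, ih, hF]
      simp only [map_sub, _root_.map_one]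
      ring

lemma charpoly_Tmat (k t : ℕ) (hk : 3 ≤ k) (ht : 2 ≤ t) (c : ℝ) :
    (Tmat k t c).charpoly
      = (X - C (k : ℝ)) * (C (c - 1) * Gpoly k (t - 2) + Gpoly k (t - 1)) := by
  obtain ⟨u, rfl⟩ : ∃ u, t = u + 2 := ⟨t - 2, by omega⟩
  have h1 : u + 2 - 1 = u + 1 := rfl
  have h2 : u + 2 - 2 = u := rfl
  rw [Matrix.charpoly, charmatrix_Tmat, det_triM, h1, h2]
  show aF k (u+2) c (u+1) * triDet _ _ _ (u+1) - bF k u * cF (u+2) c u * triDet _ _ _ u = _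
  rw [triDet_eq_F k (u+2) c (by omega) (u+1) (by omega),
      triDet_eq_F k (u+2) c (by omega) u (by omega)]
  have ha : aF k (u+2) c (u+1) = X - C ((k : ℝ) - c) := by
    simp only [aF, if_neg (by omega : ¬ u + 1 + 1 < u + 2), if_pos (by omega : 0 < u + 1),
      if_pos (by omega : u + 1 = u + 2 - 1), if_neg (by omega : ¬ u + 1 = 0)]
    norm_num
  have hc : cF (u+2) c u = -C c := by
    simp only [cF, if_pos (by omega : u + 1 = u + 2 - 1)]
  rw [ha, hc]
  match u with
  | 0 =>
    simp only [bF, if_pos rfl, Gpoly, Finset.sum_range_succ, Finset.sum_range_one, Fpoly]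
    show (X - C ((k:ℝ) - c)) * X - -C (k:ℝ) * -C c * 1 = _
    simp only [map_sub, _root_.map_one]
    ring
  | u + 1 =>
    have hG := G_identity k (u + 1) (by omega)
    have hsplit : Gpoly k (u + 2) = Gpoly k (u + 1) + Fpoly k (u + 2) := by
      simp [Gpoly, Finset.sum_range_succ]
    show (X - C ((k:ℝ) - c)) * Fpoly k (u + 2) - bF k (u+1) * -C c * Fpoly k (u+1) = _
    simp only [bF, if_neg (by omega : ¬ u + 1 = 0)]
    rw [hsplit]
    simp only [map_sub, _root_.map_one] at hG ⊢
    linear_combination (-(C c) : Polynomial ℝ) * hG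


noncomputable def spw (k : ℕ) (i : ℕ) : ℝ := if i = 0 then (k : ℝ) else (k : ℝ) - 1
noncomputable def sbw (t : ℕ) (c : ℝ) (i : ℕ) : ℝ := if i = t - 1 then c else 1

noncomputable def wgt (k t : ℕ) (c : ℝ) : ℕ → ℝ
  | 0 => 1
  | i + 1 => wgt k t c i * Real.sqrt (sbw t c (i + 1) / spw k i)

variable {k t : ℕ} {c : ℝ}

lemma spw_pos (hk : 3 ≤ k) (i : ℕ) : 0 < spw k i := by
  have : (3 : ℝ) ≤ (k : ℝ) := by exact_mod_cast hk
  unfold spw; split_ifs <;> linarith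

lemma sbw_pos (hc : 0 < c) (i : ℕ) : 0 < sbw t c i := by
  unfold sbw; split_ifs <;> [exact hc; norm_num]

lemma wgt_pos (hk : 3 ≤ k) (hc : 0 < c) : ∀ i, 0 < wgt k t c i := by
  intro i
  induction i with
  | zero => norm_num [wgt]
  | succ n ihn =>
    have h1 := spw_pos (k := k) hk n
    have h2 := sbw_pos (t := t) (c := c) hc (n + 1)
    unfold wgt
    exact mul_pos ihn (Real.sqrt_pos.2 (div_pos h2 h1))

noncomputable def Smat (k t : ℕ) (c : ℝ) : Matrix (Fin t) (Fin t) ℝ :=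
  Matrix.of fun i j => (wgt k t c i)⁻¹ * Tmat k t c i j * wgt k t c j

lemma DS_eq (hk : 3 ≤ k) (hc : 0 < c) :
    Matrix.diagonal (fun i : Fin t => wgt k t c i) * Smat k t c
      = Tmat k t c * Matrix.diagonal (fun i : Fin t => wgt k t c i) := by
  ext i j
  rw [Matrix.diagonal_mul, Matrix.mul_diagonal]
  simp only [Smat, Matrix.of_apply]
  have hw := wgt_pos (k := k) (t := t) (c := c) hk hc (i : ℕ)
  field_simp

lemma adj_helper (s r wi : ℝ) (hs : 0 < s) (hr : 0 < r) (hw : 0 < wi) :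
    (wi * Real.sqrt (r / s))⁻¹ * r * wi = wi⁻¹ * s * (wi * Real.sqrt (r / s)) := by
  have hq : 0 < r / s := div_pos hr hs
  have h1 : Real.sqrt (r / s) * Real.sqrt (r / s) = r / s := Real.mul_self_sqrt hq.le
  have h2 : Real.sqrt (r / s) ≠ 0 := ne_of_gt (Real.sqrt_pos.2 hq)
  set q := Real.sqrt (r / s) with hqdef
  have h1' : s * (q * q) = r := by
    rw [h1]; field_simp
  field_simp
  linear_combination (-1 : ℝ) * h1'

lemma Tmat_apply_val (i j : Fin t) :
    Tmat k t c i j =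
      if (j : ℕ) = (i : ℕ) + 1 then (if (i : ℕ) = 0 then (k : ℝ) else (k : ℝ) - 1)
      else if (i : ℕ) = (j : ℕ) + 1 then (if (i : ℕ) = t - 1 then c else 1)
      else if i = j then
        (k : ℝ) - (if (i : ℕ) + 1 < t then (if (i : ℕ) = 0 then (k : ℝ) else (k : ℝ) - 1) else 0)
          - (if 0 < (i : ℕ) then (if (i : ℕ) = t - 1 then c else 1) else 0)
      else 0 := rfl

lemma S_herm (hk : 3 ≤ k) (hc : 0 < c) : (Smat k t c).IsHermitian := by
  rw [Matrix.IsHermitian]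
  ext i j
  rw [Matrix.conjTranspose_apply, star_trivial]
  -- goal : Smat k t c j i = Smat k t c i j
  simp only [Smat, Matrix.of_apply]
  rcases eq_or_ne i j with rfl | hij
  · ring
  · by_cases h1 : (j : ℕ) = (i : ℕ) + 1
    · -- T i j = spw i, T j i = sbw (i+1)
      have hTij : Tmat k t c i j = spw k i := by
        rw [Tmat_apply_val, if_pos h1]; rfl
      have hTji : Tmat k t c j i = sbw t c ((i : ℕ) + 1) := by
        rw [Tmat_apply_val, if_neg (by omega), if_pos (by omega)]
        rw [h1]; rfl
      rw [hTij, hTji]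
      have hwj : wgt k t c (j : ℕ) = wgt k t c (i : ℕ) *
          Real.sqrt (sbw t c ((i : ℕ) + 1) / spw k (i : ℕ)) := by
        rw [h1]; rfl
      rw [hwj]
      have := adj_helper (spw k i) (sbw t c ((i:ℕ)+1)) (wgt k t c i)
        (spw_pos hk i) (sbw_pos hc _) (wgt_pos hk hc i)
      linarith [this]
    · by_cases h2 : (i : ℕ) = (j : ℕ) + 1
      · have hTij : Tmat k t c i j = sbw t c ((j : ℕ) + 1) := by
          rw [Tmat_apply_val, if_neg (by omega), if_pos (by omega)]
          rw [h2]; rfl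
        have hTji : Tmat k t c j i = spw k j := by
          rw [Tmat_apply_val, if_pos (by omega)]; rfl
        rw [hTij, hTji]
        have hwi : wgt k t c (i : ℕ) = wgt k t c (j : ℕ) *
            Real.sqrt (sbw t c ((j : ℕ) + 1) / spw k (j : ℕ)) := by
          rw [h2]; rfl
        rw [hwi]
        have := adj_helper (spw k j) (sbw t c ((j:ℕ)+1)) (wgt k t c j)
          (spw_pos hk j) (sbw_pos hc _) (wgt_pos hk hc j)
        linarith [this]
      · have hTij : Tmat k t c i j = 0 := by
          rw [Tmat_apply_val, if_neg h1, if_neg h2, if_neg hij]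
        have hTji : Tmat k t c j i = 0 := by
          rw [Tmat_apply_val, if_neg h2, if_neg h1, if_neg (Ne.symm hij)]
        rw [hTij, hTji]; ring

lemma KL (hk : 3 ≤ k) {μ : ℝ} {v : Fin t → ℝ}
    (hm : Tmat k t c *ᵥ v = μ • v) (h0 : ∀ j : Fin t, (j : ℕ) = 0 → v j = 0) :
    v = 0 := by
  have claim : ∀ m, ∀ j : Fin t, (j : ℕ) ≤ m → v j = 0 := by
    intro m
    induction m with
    | zero => intro j hj; exact h0 j (by omega)
    | succ m ihm =>
      intro j hj
      by_cases hjm : (j : ℕ) ≤ m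
      · exact ihm j hjm
      · have hjv : (j : ℕ) = m + 1 := by omega
        have hmlt : m < t := by have := j.isLt; omega
        set i : Fin t := ⟨m, hmlt⟩ with hi
        have hival : (i : ℕ) = m := rfl
        have hrow := congrFun hm i
        simp only [Matrix.mulVec, dotProduct, Pi.smul_apply, smul_eq_mul] at hrow
        have hvi : v i = 0 := ihm i (by simp [hi])
        rw [Finset.sum_eq_single j] at hrow
        · rw [hvi, mul_zero] at hrow
          have hTij : Tmat k t c i j = if m = 0 then (k : ℝ) else (k : ℝ) - 1 := by
            rw [Tmat_apply_val, if_pos (by omega)]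
          have hkpos : (0 : ℝ) < if m = 0 then (k : ℝ) else (k : ℝ) - 1 := by
            have : (3 : ℝ) ≤ (k : ℝ) := by exact_mod_cast hk
            split_ifs <;> linarith
          rw [hTij] at hrow
          rcases mul_eq_zero.1 hrow with h | h
          · exact absurd h (ne_of_gt hkpos)
          · exact h
        · intro b _ hbj
          by_cases hb : (b : ℕ) ≤ m
          · rw [ihm b hb, mul_zero]
          · have hbv : (b : ℕ) ≥ m + 2 := by
              have : (b : ℕ) ≠ m + 1 := fun h => hbj (Fin.ext (by omega))
              omega
            have : Tmat k t c i b = 0 := by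
              rw [Tmat_apply_val, if_neg (by omega), if_neg (by omega),
                if_neg (by intro h; have := congrArg Fin.val h; simp [hi] at this; omega)]
            rw [this, zero_mul]
        · intro h; exact absurd (Finset.mem_univ j) h
  funext l
  exact claim (l : ℕ) l le_rfl
open Polynomial Matrix

lemma charpoly_eq_of_conj {n : Type*} [Fintype n] [DecidableEq n]
    {P A S : Matrix n n ℝ} (h : P * S = A * P) (hP : P.det ≠ 0) :
    S.charpoly = A.charpoly := by
  have key : (C.mapMatrix P) * charmatrix S = charmatrix A * (C.mapMatrix P) := by
    unfold charmatrix
    rw [mul_sub, sub_mul]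
    congr 1
    · exact ((scalar_commute (X : ℝ[X]) (Commute.all X) (C.mapMatrix P)).eq).symm
    · rw [← _root_.map_mul, ← _root_.map_mul, h]
  have hdet := congrArg Matrix.det key
  rw [Matrix.det_mul, Matrix.det_mul] at hdet
  have hC : (C.mapMatrix P).det = C P.det := (RingHom.map_det C P).symm
  rw [hC] at hdet
  have hC0 : (C P.det : ℝ[X]) ≠ 0 := by
    simpa using hP
  unfold Matrix.charpoly
  apply mul_left_cancel₀ hC0
  rw [hdet, mul_comm]

lemma charpoly_diagonal {n : Type*} [Fintype n] [DecidableEq n] (d : n → ℝ) :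
    (Matrix.diagonal d).charpoly = ∏ i, (X - C (d i)) := by
  unfold Matrix.charpoly
  have : charmatrix (Matrix.diagonal d) = Matrix.diagonal (fun i => X - C (d i)) := by
    ext i j
    by_cases h : i = j
    · subst h; simp [charmatrix_apply_eq]
    · rw [charmatrix_apply_ne _ _ _ h, Matrix.diagonal_apply_ne _ h,
        Matrix.diagonal_apply_ne _ h, map_zero, neg_zero]
  rw [this, Matrix.det_diagonal]

lemma charpoly_hermitian {n : Type*} [Fintype n] [DecidableEq n] {S : Matrix n n ℝ}
    (hS : S.IsHermitian) : S.charpoly = ∏ i, (X - C (hS.eigenvalues i)) := by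
  have hst := hS.spectral_theorem
  set U : Matrix n n ℝ := (hS.eigenvectorUnitary : Matrix n n ℝ) with hU
  have hmem := hS.eigenvectorUnitary.2
  have hdiag : Matrix.diagonal (RCLike.ofReal ∘ hS.eigenvalues) = Matrix.diagonal hS.eigenvalues := by
    congr 1
  rw [hdiag] at hst
  have hUdet : U.det ≠ 0 := by
    have := Matrix.det_of_mem_unitary hmem
    intro h0
    rw [Unitary.mem_iff] at this
    rw [h0] at this
    simp at this
  have hconj : U * Matrix.diagonal hS.eigenvalues = S * U := by
    conv_rhs => rw [hst, Unitary.conjStarAlgAut_apply]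
    rw [mul_assoc, mul_assoc]
    have : (star U) * U = 1 := by
      have := hmem.1
      exact_mod_cast this
    rw [this, mul_one]
  rw [← _root_.charpoly_diagonal hS.eigenvalues]
  exact (charpoly_eq_of_conj hconj hUdet).symm

lemma eig_inj (hk : 3 ≤ k) (ht : 2 ≤ t) (hc : 0 < c) :
    Function.Injective (S_herm (k := k) (t := t) (c := c) hk hc).eigenvalues := by
  set hS := S_herm (k := k) (t := t) (c := c) hk hc with hSdef
  intro i j hij
  by_contra hne
  set e := hS.eigenvalues with he
  set u : Fin t → ℝ := ⇑(hS.eigenvectorBasis i) with hu_def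
  set u' : Fin t → ℝ := ⇑(hS.eigenvectorBasis j) with hu'_def
  have hu : Smat k t c *ᵥ u = e i • u := hS.mulVec_eigenvectorBasis i
  have hu' : Smat k t c *ᵥ u' = e i • u' := by
    rw [hij]; exact hS.mulVec_eigenvectorBasis j
  set W := Matrix.diagonal (fun l : Fin t => wgt k t c (l : ℕ)) with hW
  set p := W *ᵥ u with hp_def
  set p' := W *ᵥ u' with hp'_def
  have hTW := DS_eq (k := k) (t := t) (c := c) hk hc
  have hpval : ∀ (x : Fin t → ℝ) (l : Fin t), (W *ᵥ x) l = wgt k t c (l : ℕ) * x l :=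
    fun x l => Matrix.mulVec_diagonal _ _ _
  have hp : Tmat k t c *ᵥ p = e i • p := by
    rw [hp_def, Matrix.mulVec_mulVec, ← hTW, ← Matrix.mulVec_mulVec, hu, Matrix.mulVec_smul]
  have hp' : Tmat k t c *ᵥ p' = e i • p' := by
    rw [hp'_def, Matrix.mulVec_mulVec, ← hTW, ← Matrix.mulVec_mulVec, hu', Matrix.mulVec_smul]
  set l0 : Fin t := ⟨0, by omega⟩ with hl0
  have hKL0 : ∀ x : Fin t → ℝ, Tmat k t c *ᵥ x = e i • x → x l0 = 0 → x = 0 := by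
    intro x hx hx0
    refine KL hk hx (fun j hj => ?_)
    rwa [show j = l0 from Fin.ext (by simp [hl0, hj])]
  -- orthonormality
  have hob := (hS.eigenvectorBasis).orthonormal
  have h11 : (∑ l, u l * u l) = 1 := by
    have h := orthonormal_iff_ite.mp hob i i
    rw [if_pos rfl] at h
    simp only [PiLp.inner_apply, RCLike.inner_apply, conj_trivial] at h
    exact h
  have h11' : (∑ l, u' l * u' l) = 1 := by
    have h := orthonormal_iff_ite.mp hob j j
    rw [if_pos rfl] at h
    simp only [PiLp.inner_apply, RCLike.inner_apply, conj_trivial] at h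
    exact h
  have h10 : (∑ l, u l * u' l) = 0 := by
    have h := orthonormal_iff_ite.mp hob i j
    rw [if_neg hne] at h
    simp only [PiLp.inner_apply, RCLike.inner_apply, conj_trivial] at h
    exact (Finset.sum_congr rfl fun l _ => mul_comm _ _).trans h
  -- p' l0 ≠ 0
  have hp'0 : p' l0 ≠ 0 := by
    intro h0
    have hz := hKL0 p' hp' h0
    have hu'0 : ∀ l, u' l = 0 := by
      intro l
      have this' := congrFun hz l
      have : wgt k t c (l : ℕ) * u' l = 0 := by
        rw [← hpval u' l]; exact this'
      have hwl := wgt_pos (k := k) (t := t) (c := c) hk hc (l : ℕ)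
      rcases mul_eq_zero.1 this with h | h
      · exact absurd h (ne_of_gt hwl)
      · exact h
    rw [Finset.sum_congr rfl (fun l _ => by rw [hu'0 l, mul_zero])] at h11'
    simp at h11'
  -- the combination
  set z : Fin t → ℝ := p' l0 • p - p l0 • p' with hzdef
  have hz : Tmat k t c *ᵥ z = e i • z := by
    rw [hzdef, Matrix.mulVec_sub, Matrix.mulVec_smul, Matrix.mulVec_smul, hp, hp']
    funext l
    simp only [Pi.smul_apply, Pi.sub_apply, smul_eq_mul]
    ring
  have hz0 : z l0 = 0 := by
    simp only [hzdef, Pi.sub_apply, Pi.smul_apply, smul_eq_mul]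
    ring
  have hzz := hKL0 z hz hz0
  have hpl : ∀ l : Fin t, p l = wgt k t c (l : ℕ) * u l := fun l => hpval u l
  have hp'l : ∀ l : Fin t, p' l = wgt k t c (l : ℕ) * u' l := fun l => hpval u' l
  have hpt : ∀ l, p' l0 * u l = p l0 * u' l := by
    intro l
    have h : p' l0 * p l = p l0 * p' l := by
      have hzl := congrFun hzz l
      simp only [hzdef, Pi.sub_apply, Pi.smul_apply, smul_eq_mul, Pi.zero_apply] at hzl
      linarith [hzl]
    rw [hpl l, hp'l l] at h
    have hwl := wgt_pos (k := k) (t := t) (c := c) hk hc (l : ℕ)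
    exact mul_left_cancel₀ (ne_of_gt hwl) (by linear_combination h)
  have hfin : p' l0 = p l0 * ∑ l, u l * u' l := by
    calc p' l0 = p' l0 * ∑ l, u l * u l := by rw [h11, mul_one]
    _ = ∑ l, u l * (p' l0 * u l) := by
        rw [Finset.mul_sum]; exact Finset.sum_congr rfl fun l _ => by ring
    _ = ∑ l, u l * (p l0 * u' l) := Finset.sum_congr rfl fun l _ => by rw [hpt l]
    _ = p l0 * ∑ l, u l * u' l := by
        rw [Finset.mul_sum]; exact Finset.sum_congr rfl fun l _ => by ring
  rw [h10, mul_zero] at hfin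
  exact hp'0 hfin


end Aux

theorem stmt5 (k t : ℕ) (hk : 3 ≤ k) (ht : 2 ≤ t) (c : ℝ) (hc : 0 < c) :
    (Tmat k t c).charpoly
        = (X - C (k : ℝ)) * (C (c - 1) * Gpoly k (t - 2) + Gpoly k (t - 1)) ∧
      Multiset.card (Tmat k t c).charpoly.roots = t ∧
      (Tmat k t c).charpoly.roots.Nodup := by
  have hS := S_herm (k := k) (t := t) (c := c) hk hc
  have hdetW : (Matrix.diagonal (fun i : Fin t => wgt k t c (i : ℕ))).det ≠ 0 := by
    rw [Matrix.det_diagonal]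
    exact Finset.prod_ne_zero_iff.mpr (fun i _ => ne_of_gt (wgt_pos hk hc _))
  have hchar : (Tmat k t c).charpoly = ∏ i, (X - C (hS.eigenvalues i)) := by
    rw [← charpoly_hermitian hS]
    exact (charpoly_eq_of_conj (DS_eq hk hc) hdetW).symm
  have hprod : (∏ i, (X - C (hS.eigenvalues i)))
      = (Multiset.map (fun a => X - C a)
          (Multiset.map hS.eigenvalues Finset.univ.val)).prod := by
    rw [Multiset.map_map]
    rfl
  have hroots : (Tmat k t c).charpoly.roots
      = Multiset.map hS.eigenvalues Finset.univ.val := by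
    rw [hchar, hprod, Polynomial.roots_multiset_prod_X_sub_C]
  refine ⟨charpoly_Tmat k t hk ht c, ?_, ?_⟩
  · rw [hroots, Multiset.card_map]
    simp
  · rw [hroots]
    exact Multiset.Nodup.map (eig_inj hk ht hc) Finset.univ.nodup
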